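/- (Rüssmann-type sublevel estimate.) Let $d \ge 1$ be an integer, $I \subset \mathbb{R}$ a bounded interval, and $\Gamma : I \to \mathbb{R}$ a $C^d$ function such that $|\Gamma^{(d)}(s)| \ge c > 0$ for all $s \in I$. Then for every $\eta > 0$, the Lebesgue measure of the sublevel set $\{s \in I : |\Gamma(s)| < \eta\}$ is at most $C(d)\,(\eta/c)^{1/d}$ for a constant $C(d)$ depending only on $d$ (and the length of $I$). -/

import Mathlib

noncomputable section

open MeasureTheory

/-- Growth lemma: if `g` has derivative `g' ≥ c` within `[a,b]`, then
`c * (y - x) ≤ g y - g x` for `x ≤ y` in `[a,b]`. -/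
lemma russmann_grow (a b : ℝ) (g g' : ℝ → ℝ) (c : ℝ)
    (hder : ∀ x ∈ Set.Icc a b, HasDerivWithinAt g (g' x) (Set.Icc a b) x)
    (hc : ∀ x ∈ Set.Icc a b, c ≤ g' x) :
    ∀ x ∈ Set.Icc a b, ∀ y ∈ Set.Icc a b, x ≤ y → c * (y - x) ≤ g y - g x := by
  have hcont : ContinuousOn g (Set.Icc a b) := fun x hx => (hder x hx).continuousWithinAt
  have hda : ∀ x ∈ interior (Set.Icc a b), HasDerivAt g (g' x) x := by
    intro x hx
    rw [interior_Icc] at hx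
    exact (hder x (Set.Ioo_subset_Icc_self hx)).hasDerivAt (Icc_mem_nhds hx.1 hx.2)
  exact (convex_Icc a b).mul_sub_le_image_sub_of_le_deriv hcont
    (fun x hx => ((hda x hx).differentiableAt).differentiableWithinAt)
    (fun x hx => by
      rw [(hda x hx).deriv]
      exact hc x (Set.Ioo_subset_Icc_self (by rwa [interior_Icc] at hx)))

/-- The inductive statement: positive top derivative version. -/
def RussmannAuxP (d : ℕ) : Prop :=
  ∀ (a b : ℝ) (f : ℕ → ℝ → ℝ) (c η : ℝ), 0 < c → 0 < η →
    (∀ i < d, ∀ x ∈ Set.Icc a b, HasDerivWithinAt (f i) (f (i+1) x) (Set.Icc a b) x) →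
    (∀ x ∈ Set.Icc a b, c ≤ f d x) →
    volume {s ∈ Set.Icc a b | |f 0 s| < η} ≤
      ENNReal.ofReal ((4:ℝ)^d * (η/c) ^ ((1:ℝ)/d))

lemma russmann_auxP_one : RussmannAuxP 1 := by
  intro a b f c η hc hη chain htop
  rcases Set.eq_empty_or_nonempty {s ∈ Set.Icc a b | |f 0 s| < η} with h | ⟨s0, hs0⟩
  · rw [h]
    simp
  · have hgrow := russmann_grow a b (f 0) (f 1) c (fun x hx => chain 0 one_pos x hx) htop
    have key : ∀ t ∈ {s ∈ Set.Icc a b | |f 0 s| < η}, |t - s0| ≤ 2 * (η / c) := by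
      intro t ht
      have h0t := abs_lt.1 ht.2
      have h0s := abs_lt.1 hs0.2
      rcases le_total s0 t with hle | hle
      · have := hgrow s0 hs0.1 t ht.1 hle
        rw [abs_of_nonneg (by linarith)]
        rw [show 2 * (η / c) = 2 * η / c by ring, le_div_iff₀ hc]
        nlinarith
      · have := hgrow t ht.1 s0 hs0.1 hle
        rw [abs_of_nonpos (by linarith)]
        rw [show 2 * (η / c) = 2 * η / c by ring, le_div_iff₀ hc]
        nlinarith
    have hsub : {s ∈ Set.Icc a b | |f 0 s| < η} ⊆
        Set.Icc (s0 - 2 * (η / c)) (s0 + 2 * (η / c)) := by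
      intro t ht
      have := abs_le.1 (key t ht)
      exact ⟨by linarith [this.1], by linarith [this.2]⟩
    calc volume {s ∈ Set.Icc a b | |f 0 s| < η}
        ≤ volume (Set.Icc (s0 - 2 * (η / c)) (s0 + 2 * (η / c))) := measure_mono hsub
      _ = ENNReal.ofReal (4 * (η / c)) := by rw [Real.volume_Icc]; ring_nf
      _ ≤ ENNReal.ofReal ((4:ℝ)^1 * (η/c) ^ ((1:ℝ)/(1:ℕ))) := by
          norm_num

lemma russmann_auxP_succ (d : ℕ) (hd : 1 ≤ d) (ih : RussmannAuxP d) :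
    RussmannAuxP (d + 1) := by
  intro a b f c η hc hη chain htop
  have hηc : 0 < η / c := div_pos hη hc
  set r : ℝ := (η / c) ^ ((1:ℝ)/((d:ℝ)+1)) with hr_def
  have hr : 0 < r := Real.rpow_pos_of_pos hηc _
  set δ : ℝ := c * r with hδ_def
  have hδ : 0 < δ := mul_pos hc hr
  have hdR : (0:ℝ) < (d:ℝ) := by exact_mod_cast hd
  -- key arithmetic: (η/δ) ^ (1/d) = r
  have hδc : δ / c = r := by
    rw [hδ_def, mul_comm, mul_div_assoc, div_self hc.ne', mul_one]
  have hηδ : η / δ = (η / c) ^ ((d:ℝ)/((d:ℝ)+1)) := by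
    have h1 : η / δ = (η / c) / r := by rw [hδ_def, ← div_div]
    have h2 : (1:ℝ) - 1/((d:ℝ)+1) = (d:ℝ)/((d:ℝ)+1) := by field_simp; ring
    have h3 := Real.rpow_sub hηc 1 (1/((d:ℝ)+1))
    rw [Real.rpow_one] at h3
    rw [h1, hr_def, ← h3, h2]
  have harith : (η / δ) ^ ((1:ℝ)/(d:ℝ)) = r := by
    rw [hηδ, ← Real.rpow_mul hηc.le, hr_def]
    congr 1
    field_simp
  -- continuity and monotonicity of f d
  have hfd_cont : ContinuousOn (f d) (Set.Icc a b) :=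
    fun x hx => (chain d (by omega) x hx).continuousWithinAt
  have hmono := russmann_grow a b (f d) (f (d+1)) c
    (fun x hx => chain d (by omega) x hx) htop
  -- the three pieces
  set S := {s ∈ Set.Icc a b | |f 0 s| < η} with hS_def
  set B := {s ∈ Set.Icc a b | |f d s| < δ} with hB_def
  set L := Set.Icc a b ∩ (f d) ⁻¹' (Set.Iic (-δ)) with hL_def
  set R := Set.Icc a b ∩ (f d) ⁻¹' (Set.Ici δ) with hR_def
  have hcover : S ⊆ B ∪ (S ∩ L) ∪ (S ∩ R) := by
    intro s hs
    rcases lt_or_ge (|f d s|) δ with h | h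
    · exact Or.inl (Or.inl ⟨hs.1, h⟩)
    · rcases le_abs'.1 h with h' | h'
      · exact Or.inl (Or.inr ⟨hs, hs.1, h'⟩)
      · exact Or.inr ⟨hs, hs.1, h'⟩
  -- bound on B via the base case
  have hvolB : volume B ≤ ENNReal.ofReal (4 * r) := by
    have := russmann_auxP_one a b (fun i => f (d + i)) c δ hc hδ
      (fun i hi x hx => by
        interval_cases i
        exact chain d (by omega) x hx)
      (fun x hx => htop x hx)
    simp only [Nat.add_zero] at this
    refine le_trans this ?_
    apply ENNReal.ofReal_le_ofReal
    rw [show ((1:ℝ)/((1:ℕ):ℝ)) = 1 by norm_num, Real.rpow_one, hδc]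
    norm_num
  -- bound on S ∩ L
  have hvolL : volume (S ∩ L) ≤ ENNReal.ofReal ((4:ℝ)^d * r) := by
    rcases Set.eq_empty_or_nonempty L with hLe | hLne
    · rw [hLe]
      simp
    · have hLclosed : IsClosed L :=
        hfd_cont.preimage_isClosed_of_isClosed isClosed_Icc isClosed_Iic
      have hLcpt : IsCompact L :=
        isCompact_Icc.of_isClosed_subset hLclosed Set.inter_subset_left
      set x₀ := sSup L with hx0_def
      have hx0 : x₀ ∈ L := hLcpt.sSup_mem hLne
      have hx0ab : x₀ ∈ Set.Icc a b := hx0.1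
      have hIccsub : Set.Icc a x₀ ⊆ Set.Icc a b := Set.Icc_subset_Icc_right hx0ab.2
      have htop' : ∀ x ∈ Set.Icc a x₀, δ ≤ -(f d x) := by
        intro x hx
        have hxab : x ∈ Set.Icc a b := hIccsub hx
        have := hmono x hxab x₀ hx0ab hx.2
        have hle : f d x₀ ≤ -δ := hx0.2
        nlinarith [hc.le, hx.2]
      have := ih a x₀ (fun i x => -(f i x)) δ η hδ hη
        (fun i hi x hx =>
          ((chain i (by omega) x (hIccsub hx)).mono hIccsub).neg)
        htop'
      have hsub : S ∩ L ⊆ {s ∈ Set.Icc a x₀ | |(fun x => -(f 0 x)) s| < η} := by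
        intro s hs
        refine ⟨⟨hs.2.1.1, le_csSup hLcpt.bddAbove hs.2⟩, ?_⟩
        simpa [abs_neg] using hs.1.2
      refine le_trans (measure_mono hsub) (le_trans this ?_)
      apply ENNReal.ofReal_le_ofReal
      rw [harith]
  -- bound on S ∩ R
  have hvolR : volume (S ∩ R) ≤ ENNReal.ofReal ((4:ℝ)^d * r) := by
    rcases Set.eq_empty_or_nonempty R with hRe | hRne
    · rw [hRe]
      simp
    · have hRclosed : IsClosed R :=
        hfd_cont.preimage_isClosed_of_isClosed isClosed_Icc isClosed_Ici
      have hRcpt : IsCompact R :=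
        isCompact_Icc.of_isClosed_subset hRclosed Set.inter_subset_left
      set y₀ := sInf R with hy0_def
      have hy0 : y₀ ∈ R := hRcpt.sInf_mem hRne
      have hy0ab : y₀ ∈ Set.Icc a b := hy0.1
      have hIccsub : Set.Icc y₀ b ⊆ Set.Icc a b := Set.Icc_subset_Icc_left hy0ab.1
      have htop' : ∀ x ∈ Set.Icc y₀ b, δ ≤ f d x := by
        intro x hx
        have hxab : x ∈ Set.Icc a b := hIccsub hx
        have := hmono y₀ hy0ab x hxab hx.1
        have hge : δ ≤ f d y₀ := hy0.2
        nlinarith [hc.le, hx.1]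
      have := ih y₀ b f δ η hδ hη
        (fun i hi x hx => (chain i (by omega) x (hIccsub hx)).mono hIccsub)
        htop'
      have hsub : S ∩ R ⊆ {s ∈ Set.Icc y₀ b | |f 0 s| < η} := by
        intro s hs
        exact ⟨⟨csInf_le hRcpt.bddBelow hs.2, hs.2.1.2⟩, hs.1.2⟩
      refine le_trans (measure_mono hsub) (le_trans this ?_)
      apply ENNReal.ofReal_le_ofReal
      rw [harith]
  -- combine
  have htotal : volume S ≤ ENNReal.ofReal (4 * r) +
      (ENNReal.ofReal ((4:ℝ)^d * r) + ENNReal.ofReal ((4:ℝ)^d * r)) := by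
    refine le_trans (measure_mono hcover) ?_
    refine le_trans (measure_union_le _ _) ?_
    refine add_le_add (le_trans (measure_union_le _ _) (add_le_add hvolB hvolL)) hvolR
      |>.trans_eq ?_
    ring
  refine le_trans htotal ?_
  rw [← ENNReal.ofReal_add (by positivity) (by positivity),
    ← ENNReal.ofReal_add (by positivity) (by positivity)]
  apply ENNReal.ofReal_le_ofReal
  have h4 : (4:ℝ) ≤ 4 ^ d := by
    calc (4:ℝ) = 4 ^ 1 := (pow_one 4).symm
    _ ≤ 4 ^ d := pow_le_pow_right₀ (by norm_num) hd
  have hcast : ((1:ℝ)/((d + 1 : ℕ):ℝ)) = (1:ℝ)/((d:ℝ)+1) := by push_cast; ring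
  rw [hcast, ← hr_def, pow_succ]
  nlinarith [hr.le, mul_le_mul_of_nonneg_right h4 hr.le,
    mul_nonneg (pow_nonneg (by norm_num : (0:ℝ) ≤ 4) d) hr.le]

lemma russmann_auxP (d : ℕ) (hd : 1 ≤ d) : RussmannAuxP d := by
  induction d, hd using Nat.le_induction with
  | base => exact russmann_auxP_one
  | succ d hd ih => exact russmann_auxP_succ d hd ih

/-- Absolute value version. -/
lemma russmann_auxAbs (d : ℕ) (hd : 1 ≤ d) (a b : ℝ) (f : ℕ → ℝ → ℝ) (c η : ℝ)
    (hc : 0 < c) (hη : 0 < η)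
    (chain : ∀ i < d, ∀ x ∈ Set.Icc a b, HasDerivWithinAt (f i) (f (i+1) x) (Set.Icc a b) x)
    (hcont : ContinuousOn (f d) (Set.Icc a b))
    (htop : ∀ x ∈ Set.Icc a b, c ≤ |f d x|) :
    volume {s ∈ Set.Icc a b | |f 0 s| < η} ≤
      ENNReal.ofReal ((4:ℝ)^d * (η/c) ^ ((1:ℝ)/d)) := by
  rcases le_or_gt a b with hab | hab
  swap
  · rw [Set.Icc_eq_empty (not_le.mpr hab)]
    simp
  have hsign : (∀ x ∈ Set.Icc a b, c ≤ f d x) ∨ (∀ x ∈ Set.Icc a b, c ≤ -(f d x)) := by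
    by_cases hpos : ∀ x ∈ Set.Icc a b, 0 < f d x
    · left
      intro x hx
      have := htop x hx
      rwa [abs_of_pos (hpos x hx)] at this
    · push_neg at hpos
      obtain ⟨x₁, hx₁, hx₁le⟩ := hpos
      have hx₁neg : f d x₁ ≤ -c := by
        rcases le_abs'.1 (htop x₁ hx₁) with h | h
        · exact h
        · linarith
      right
      intro x hx
      by_contra hcon
      push_neg at hcon
      have hxpos : c ≤ f d x := by
        rcases le_abs'.1 (htop x hx) with h | h
        · linarith
        · exact h
      have huIcc : Set.uIcc x₁ x ⊆ Set.Icc a b :=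
        (Set.ordConnected_Icc).uIcc_subset hx₁ hx
      have hiv := intermediate_value_uIcc (hcont.mono huIcc)
      have h0mem : (0:ℝ) ∈ Set.uIcc (f d x₁) (f d x) := by
        rw [Set.mem_uIcc]
        left
        exact ⟨by linarith, by linarith⟩
      obtain ⟨z, hz, hz0⟩ := hiv h0mem
      have := htop z (huIcc hz)
      rw [hz0] at this
      simp at this
      linarith
  rcases hsign with h | h
  · exact russmann_auxP d hd a b f c η hc hη chain h
  · have := russmann_auxP d hd a b (fun i x => -(f i x)) c η hc hη
      (fun i hi x hx => (chain i hi x hx).neg) h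
    simpa [abs_neg] using this

/-- Rüssmann-type sublevel estimate: if `Γ : [a,b] → ℝ` is `C^d` with `|Γ^{(d)}| ≥ c > 0` on
`[a,b]`, then for every `η > 0` the sublevel set `{s ∈ [a,b] : |Γ s| < η}` has Lebesgue measure
at most `C(d) (η/c)^{1/d}`, with `C` depending only on `d` (and the length of the interval). -/
theorem russmann_sublevel (d : ℕ) (hd : 1 ≤ d) (a b : ℝ) (hab : a < b) :
    ∃ C : ℝ, 0 < C ∧
      ∀ (Γ : ℝ → ℝ) (c η : ℝ), 0 < c → 0 < η →
        ContDiffOn ℝ d Γ (Set.Icc a b) →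
        (∀ s ∈ Set.Icc a b, c ≤ |iteratedDerivWithin d Γ (Set.Icc a b) s|) →
        volume {s ∈ Set.Icc a b | |Γ s| < η} ≤
          ENNReal.ofReal (C * (η / c) ^ ((1 : ℝ) / d)) := by
  refine ⟨(4:ℝ)^d, by positivity, ?_⟩
  intro Γ c η hc hη hΓ hlow
  have hu : UniqueDiffOn ℝ (Set.Icc a b) := uniqueDiffOn_Icc hab
  set f : ℕ → ℝ → ℝ := fun i => iteratedDerivWithin i Γ (Set.Icc a b) with hf_def
  have chain : ∀ i < d, ∀ x ∈ Set.Icc a b,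
      HasDerivWithinAt (f i) (f (i+1) x) (Set.Icc a b) x := by
    intro i hi x hx
    have hdiff : DifferentiableWithinAt ℝ (f i) (Set.Icc a b) x :=
      hΓ.differentiableOn_iteratedDerivWithin (by exact_mod_cast hi) hu x hx
    have h1 : f (i+1) x = derivWithin (f i) (Set.Icc a b) x :=
      congrFun iteratedDerivWithin_succ x
    rw [h1]
    exact hdiff.hasDerivWithinAt
  have hcont : ContinuousOn (f d) (Set.Icc a b) :=
    hΓ.continuousOn_iteratedDerivWithin le_rfl hu
  have := russmann_auxAbs d hd a b f c η hc hη chain hcont hlow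
  simpa [hf_def, iteratedDerivWithin_zero] using this
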